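/- Let R be a unital Banach algebra, let Q ∈ R commute with A and Z, and assume ‖Z‖ < 1 and all factors I − Q^j Z (implicitly needed) are invertible. Define f(A,Z) := Σ_{k≥0} ∏_{j=1}^k [(I − Q^{k−j})^{−1} (I − A Q^{k−j}) Z] (the type I noncommutative q-binomial series). Then f(A,Z) = ∏_{j=1}^∞ [(I − Z Q^{j−1})^{−1} (I − A Z Q^{j−1})], i.e., the noncommutative q-binomial theorem of type I holds. -/

import Mathlib

open Filter Topology

section aux
variable {R : Type*} [Ring R]

lemma commute_ringInverse {x y : R} (h : Commute x y) : Commute x (Ring.inverse y) := by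
  by_cases hu : IsUnit y
  · obtain ⟨u, rfl⟩ := hu
    rw [Ring.inverse_unit]
    exact h.units_inv_right
  · rw [Ring.inverse_non_unit _ hu]
    exact Commute.zero_right x

/-- the summand of the q-binomial series -/
noncomputable def qc (Q A Z : R) (k : ℕ) : R :=
  ((List.range k).map (fun i =>
    Ring.inverse (1 - Q ^ (k - i)) * (1 - A * Q ^ (k - 1 - i)) * Z)).prod

lemma qc_zero (Q A Z : R) : qc Q A Z 0 = 1 := rfl

lemma qc_succ (Q A Z : R) (k : ℕ) :
    qc Q A Z (k + 1) = Ring.inverse (1 - Q ^ (k + 1)) * (1 - A * Q ^ k) * Z * qc Q A Z k := by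
  unfold qc
  rw [List.range_succ_eq_map, List.map_cons, List.prod_cons, List.map_map]
  congr 1
  apply congrArg
  apply List.map_congr_left
  intro a ha
  simp only [Function.comp_apply, Nat.succ_sub_succ]
  have h2 : k - 0 - a.succ = k - 1 - a := by omega
  rw [h2]

lemma qc_commute (Q A Z : R) (hQA : Q * A = A * Q) (hQZ : Q * Z = Z * Q) (k : ℕ) :
    Commute Q (qc Q A Z k) := by
  apply Commute.list_prod_right
  intro x hx
  simp only [List.mem_map, List.mem_range] at hx
  obtain ⟨i, -, rfl⟩ := hx
  have cQA : Commute Q A := hQA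
  have cQZ : Commute Q Z := hQZ
  exact ((commute_ringInverse ((Commute.one_right Q).sub_right
      ((Commute.refl Q).pow_right _))).mul_right
    ((Commute.one_right Q).sub_right (cQA.mul_right ((Commute.refl Q).pow_right _)))).mul_right cQZ

lemma qc_rec (Q A Z : R) (hu1 : ∀ j : ℕ, IsUnit (1 - Q ^ (j + 1))) (k : ℕ) :
    (1 - Q ^ (k + 1)) * qc Q A Z (k + 1) = (1 - A * Q ^ k) * (Z * qc Q A Z k) := by
  rw [qc_succ, mul_assoc, mul_assoc, Ring.mul_inverse_cancel_left _ _ (hu1 k), ← mul_assoc]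

end aux

theorem nc_q_binomial_typeI {R : Type*} [NormedRing R] [NormedAlgebra ℂ R]
    [CompleteSpace R] (Q A Z : R)
    (hQA : Q * A = A * Q) (hQZ : Q * Z = Z * Q)
    (hQ : ‖Q‖ < 1) (hZ : ‖Z‖ < 1)
    (hu1 : ∀ j : ℕ, IsUnit (1 - Q ^ (j + 1)))
    (hu2 : ∀ j : ℕ, IsUnit (1 - Z * Q ^ j))
    (P : R)
    (hP : Tendsto (fun n : ℕ => ((List.range n).map (fun j =>
        Ring.inverse (1 - Z * Q ^ j) * (1 - A * Z * Q ^ j))).prod) atTop (nhds P)) :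
    HasSum (fun k : ℕ => ((List.range k).map (fun i =>
        Ring.inverse (1 - Q ^ (k - i)) * (1 - A * Q ^ (k - 1 - i)) * Z)).prod) P := by
  have hcomm : ∀ k, Commute Q (qc Q A Z k) := qc_commute Q A Z hQA hQZ
  -- the k-th factor tends to Z
  have hfac : Tendsto (fun k : ℕ => Ring.inverse (1 - Q ^ (k + 1)) * (1 - A * Q ^ k) * Z)
      atTop (𝓝 Z) := by
    have hpow : Tendsto (fun k : ℕ => Q ^ k) atTop (𝓝 0) :=
      tendsto_pow_atTop_nhds_zero_of_norm_lt_one hQ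
    have hpow1 : Tendsto (fun k : ℕ => Q ^ (k + 1)) atTop (𝓝 0) :=
      (tendsto_add_atTop_iff_nat 1).mpr hpow
    have h1 : Tendsto (fun k : ℕ => (1 : R) - Q ^ (k + 1)) atTop (𝓝 1) := by
      simpa using tendsto_const_nhds.sub hpow1
    have hinv : Tendsto (fun k : ℕ => Ring.inverse (1 - Q ^ (k + 1))) atTop (𝓝 1) := by
      have hc : ContinuousAt Ring.inverse ((1 : Rˣ) : R) := NormedRing.inverse_continuousAt 1
      rw [Units.val_one] at hc
      have := hc.tendsto.comp h1
      rw [Ring.inverse_one] at this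
      exact this
    have h2 : Tendsto (fun k : ℕ => (1 : R) - A * Q ^ k) atTop (𝓝 1) := by
      simpa using tendsto_const_nhds.sub (hpow.const_mul A)
    simpa using (hinv.mul h2).mul (tendsto_const_nhds (x := Z))
  -- absolute summability of the summands
  have hSc : Summable (fun k => ‖qc Q A Z k‖) := by
    set r : ℝ := (1 + ‖Z‖) / 2 with hr
    have hr1 : r < 1 := by rw [hr]; linarith
    have hZr : ‖Z‖ < r := by rw [hr]; linarith
    have hev : ∀ᶠ k in atTop,
        ‖Ring.inverse (1 - Q ^ (k + 1)) * (1 - A * Q ^ k) * Z‖ ≤ r :=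
      ((hfac.norm).eventually_lt_const hZr).mono fun k hk => hk.le
    apply summable_of_ratio_norm_eventually_le hr1
    filter_upwards [hev] with k hk
    have h1 : ‖qc Q A Z (k + 1)‖ ≤ r * ‖qc Q A Z k‖ := by
      rw [qc_succ]
      calc ‖Ring.inverse (1 - Q ^ (k + 1)) * (1 - A * Q ^ k) * Z * qc Q A Z k‖
          ≤ ‖Ring.inverse (1 - Q ^ (k + 1)) * (1 - A * Q ^ k) * Z‖ * ‖qc Q A Z k‖ :=
            norm_mul_le _ _
        _ ≤ r * ‖qc Q A Z k‖ := by
            exact mul_le_mul_of_nonneg_right hk (norm_nonneg _)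
    calc ‖‖qc Q A Z (k + 1)‖‖ = ‖qc Q A Z (k + 1)‖ := by simp
      _ ≤ r * ‖qc Q A Z k‖ := h1
      _ = r * ‖‖qc Q A Z k‖‖ := by simp
  set d : ℕ → ℕ → R := fun n k => qc Q A Z k * Q ^ (n * k) with hd
  have hQle : ‖Q‖ ≤ 1 := hQ.le
  have hQpow : ∀ m : ℕ, ‖Q ^ m‖ ≤ max ‖(1 : R)‖ 1 := by
    intro m
    rcases Nat.eq_zero_or_pos m with hm | hm
    · subst hm; simpa using le_max_left _ _
    · calc ‖Q ^ m‖ ≤ ‖Q‖ ^ m := norm_pow_le' Q hm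
        _ ≤ 1 := pow_le_one₀ (norm_nonneg Q) hQle
        _ ≤ max ‖(1 : R)‖ 1 := le_max_right _ _
  have hSd : ∀ n, Summable (d n) := by
    intro n
    apply Summable.of_norm_bounded (g := fun k => ‖qc Q A Z k‖ * max ‖(1 : R)‖ 1)
      (hSc.mul_right _)
    intro k
    calc ‖qc Q A Z k * Q ^ (n * k)‖ ≤ ‖qc Q A Z k‖ * ‖Q ^ (n * k)‖ := norm_mul_le _ _
      _ ≤ ‖qc Q A Z k‖ * max ‖(1 : R)‖ 1 :=
          mul_le_mul_of_nonneg_left (hQpow _) (norm_nonneg _)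
  set F : ℕ → R := fun n => ∑' k, d n k with hFdef
  have hF : ∀ n, HasSum (d n) (F n) := fun n => (hSd n).hasSum
  -- the functional equation
  have feq : ∀ n, (1 - Z * Q ^ n) * F n = (1 - A * Z * Q ^ n) * F (n + 1) := by
    intro n
    have cQZ : Commute Q Z := hQZ
    have cQA : Commute Q A := hQA
    have hZ0 : ∀ m : ℕ, Z * Q ^ m = Q ^ m * Z := fun m => ((cQZ.pow_left m).eq).symm
    have hZ1 : ∀ (m : ℕ) (y : R), Z * (Q ^ m * y) = Q ^ m * (Z * y) := fun m y => by
      rw [← mul_assoc, hZ0, mul_assoc]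
    have hA0 : ∀ m : ℕ, A * Q ^ m = Q ^ m * A := fun m => ((cQA.pow_left m).eq).symm
    have hA1 : ∀ (m : ℕ) (y : R), A * (Q ^ m * y) = Q ^ m * (A * y) := fun m y => by
      rw [← mul_assoc, hA0, mul_assoc]
    have hC0 : ∀ (j m : ℕ), qc Q A Z j * Q ^ m = Q ^ m * qc Q A Z j := fun j m =>
      (((hcomm j).pow_left m).eq).symm
    have hC1 : ∀ (j m : ℕ) (y : R), qc Q A Z j * (Q ^ m * y) = Q ^ m * (qc Q A Z j * y) :=
      fun j m y => by rw [← mul_assoc, hC0, mul_assoc]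
    have hQQ0 : ∀ a b : ℕ, (Q ^ a) * Q ^ b = Q ^ (a + b) := fun a b => (pow_add Q a b).symm
    have hQQ1 : ∀ (a b : ℕ) (y : R), Q ^ a * (Q ^ b * y) = Q ^ (a + b) * y := fun a b y => by
      rw [← mul_assoc, ← pow_add]
    have key : ∀ k, d n (k + 1) - d n (k + 1) * Q ^ (k + 1)
        = Z * Q ^ n * d n k - A * Z * Q ^ n * (d n k * Q ^ k) := by
      intro k
      have h := congrArg (fun x : R => x * Q ^ (n * k + n)) (qc_rec Q A Z hu1 k)
      simp only [sub_mul, one_mul, mul_assoc, hZ1, hZ0, hA1, hA0, hC1, hC0, hQQ1, hQQ0] at h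
      simp only [hd, Nat.mul_succ, sub_mul, one_mul, mul_assoc, hZ1, hZ0, hA1, hA0, hC1,
        hC0, hQQ1, hQQ0, Nat.add_comm, Nat.add_assoc, Nat.add_left_comm]
      convert h using 3 <;> ring_nf
    have hF' : HasSum (fun k => d n k * Q ^ k) (F (n + 1)) := by
      have e : (fun k => d n k * Q ^ k) = d (n + 1) := by
        funext k
        simp only [hd]
        rw [mul_assoc, ← pow_add, Nat.succ_mul]
      rw [e]; exact hF (n + 1)
    have h1 : HasSum (fun k => d n k - d n k * Q ^ k) (F n - F (n + 1)) := (hF n).sub hF'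
    have h2 := (hasSum_nat_add_iff' (f := fun k => d n k - d n k * Q ^ k) 1).mpr h1
    have e2 : ∑ i ∈ Finset.range 1, (d n i - d n i * Q ^ i) = 0 := by simp [hd, qc_zero]
    rw [e2, sub_zero] at h2
    have h3 : (fun k => d n (k + 1) - d n (k + 1) * Q ^ (k + 1))
        = fun k => Z * Q ^ n * d n k - A * Z * Q ^ n * (d n k * Q ^ k) := by
      funext k; exact key k
    rw [h3] at h2
    have h4 : HasSum (fun k => Z * Q ^ n * d n k - A * Z * Q ^ n * (d n k * Q ^ k))
        (Z * Q ^ n * F n - A * Z * Q ^ n * F (n + 1)) :=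
      ((hF n).mul_left _).sub (hF'.mul_left _)
    have h5 : F n - F (n + 1) = Z * Q ^ n * F n - A * Z * Q ^ n * F (n + 1) :=
      h2.unique h4
    rw [sub_mul, sub_mul, one_mul, one_mul, sub_eq_sub_iff_sub_eq_sub]
    exact h5
  -- partial products
  have hGF : ∀ n, F 0 = ((List.range n).map (fun j =>
      Ring.inverse (1 - Z * Q ^ j) * (1 - A * Z * Q ^ j))).prod * F n := by
    intro n
    induction n with
    | zero => simp
    | succ n ih =>
      have hFn : F n = Ring.inverse (1 - Z * Q ^ n) * ((1 - A * Z * Q ^ n) * F (n + 1)) := by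
        rw [← feq n, Ring.inverse_mul_cancel_left _ _ (hu2 n)]
      rw [ih, hFn, List.range_succ, List.map_append, List.prod_append]
      simp [mul_assoc]
  have hF1 : Tendsto F atTop (𝓝 1) := by
    have hC : Summable (fun k => ‖qc Q A Z (k + 1)‖) := (summable_nat_add_iff (f := fun k => ‖qc Q A Z k‖) 1).mpr hSc
    have hbound : ∀ n : ℕ, 1 ≤ n →
        ‖F n - 1‖ ≤ (∑' k, ‖qc Q A Z (k + 1)‖) * ‖Q‖ ^ n := by
      intro n hn
      have h1 : HasSum (fun k => qc Q A Z (k + 1) * Q ^ (n * (k + 1))) (F n - 1) := by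
        have h0 := (hasSum_nat_add_iff' (f := d n) 1).mpr (hF n)
        have e1 : ∑ i ∈ Finset.range 1, d n i = 1 := by
          simp [hd, qc_zero]
        rw [e1] at h0
        exact h0
      have h2 : HasSum (fun k : ℕ => ‖qc Q A Z (k + 1)‖ * ‖Q‖ ^ n)
          ((∑' k, ‖qc Q A Z (k + 1)‖) * ‖Q‖ ^ n) := hC.hasSum.mul_right _
      have h3 : ∀ k : ℕ, ‖qc Q A Z (k + 1) * Q ^ (n * (k + 1))‖ ≤
          ‖qc Q A Z (k + 1)‖ * ‖Q‖ ^ n := by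
        intro k
        calc ‖qc Q A Z (k + 1) * Q ^ (n * (k + 1))‖
            ≤ ‖qc Q A Z (k + 1)‖ * ‖Q ^ (n * (k + 1))‖ := norm_mul_le _ _
          _ ≤ ‖qc Q A Z (k + 1)‖ * ‖Q‖ ^ n := by
              apply mul_le_mul_of_nonneg_left _ (norm_nonneg _)
              calc ‖Q ^ (n * (k + 1))‖ ≤ ‖Q‖ ^ (n * (k + 1)) :=
                    norm_pow_le' _ (Nat.mul_pos hn (Nat.succ_pos k))
                _ ≤ ‖Q‖ ^ n := pow_le_pow_of_le_one (norm_nonneg _) hQle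
                    (Nat.le_mul_of_pos_right n (Nat.succ_pos k))
      rw [← h1.tsum_eq]
      exact tsum_of_norm_bounded h2 h3
    have h0 : Tendsto (fun n : ℕ => (∑' k, ‖qc Q A Z (k + 1)‖) * ‖Q‖ ^ n) atTop (𝓝 0) := by
      simpa using (tendsto_pow_atTop_nhds_zero_of_lt_one (norm_nonneg Q) hQ).const_mul
        (∑' k, ‖qc Q A Z (k + 1)‖)
    have hsub : Tendsto (fun n => F n - 1) atTop (𝓝 0) := by
      apply squeeze_zero_norm' _ h0
      filter_upwards [eventually_ge_atTop 1] with n hn using hbound n hn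
    simpa using hsub.add_const 1
  have hF0 : F 0 = P := by
    have h1 : Tendsto (fun n => ((List.range n).map (fun j =>
        Ring.inverse (1 - Z * Q ^ j) * (1 - A * Z * Q ^ j))).prod * F n) atTop (𝓝 (P * 1)) :=
      hP.mul hF1
    have h2 : Tendsto (fun _ : ℕ => F 0) atTop (𝓝 (F 0)) := tendsto_const_nhds
    have h3 : (fun n => ((List.range n).map (fun j =>
        Ring.inverse (1 - Z * Q ^ j) * (1 - A * Z * Q ^ j))).prod * F n) = fun _ => F 0 := by
      funext n; exact (hGF n).symm
    rw [h3] at h1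
    simpa using tendsto_nhds_unique h2 h1
  have h := hF 0
  simp only [hd, Nat.zero_mul, pow_zero, mul_one] at h
  rwa [hF0] at h
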